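/- Let A ∈ ℝ^{m×n} have nonzero columns a_1,…,a_n and let S* = S*_A. Then the linear span of P_A equals the column space im(A_{S*}) of the submatrix A_{S*} formed by the columns of A indexed by S*, and P_A = P_{A_{S*}}. -/

import Mathlib

open Matrix Set MeasureTheory Pointwise ENNReal

noncomputable section

/-- Euclidean dot product on `Fin d → ℝ`. -/
def dotp {d : ℕ} (u v : Fin d → ℝ) : ℝ := ∑ i, u i * v i

/-- Euclidean norm on `Fin d → ℝ`. -/
def norm2 {d : ℕ} (v : Fin d → ℝ) : ℝ := Real.sqrt (∑ i, v i ^ 2)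

/-- Normalization `v / ‖v‖`, with the convention that `0` is mapped to `0`. -/
def nml {d : ℕ} (v : Fin d → ℝ) : Fin d → ℝ := (norm2 v)⁻¹ • v

/-- The `j`-th column of a matrix. -/
def mcol {d : ℕ} {ι : Type} (A : Matrix (Fin d) ι ℝ) (j : ι) : Fin d → ℝ := fun i => A i j

/-- Goffin's condition measure `ρ_A = max_{y ∈ im(A) \ {0}} min_j â_jᵀ ŷ`. -/
def goffin {d : ℕ} {ι : Type} [Fintype ι] (A : Matrix (Fin d) ι ℝ) : ℝ :=
  sSup { r : ℝ | ∃ y : Fin d → ℝ, (∃ x : ι → ℝ, A.mulVec x = y) ∧ y ≠ 0 ∧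
    r = ⨅ j : ι, dotp (nml (mcol A j)) (nml y) }

/-- The cone `Σ_A = {y : Aᵀ y ≥ 0}`. -/
def SigmaCone {d : ℕ} {ι : Type} (A : Matrix (Fin d) ι ℝ) : Set (Fin d → ℝ) :=
  { y | ∀ j, 0 ≤ dotp (mcol A j) y }

/-- `F_A = Σ_A ∩ B^d`. -/
def FA {d : ℕ} {ι : Type} (A : Matrix (Fin d) ι ℝ) : Set (Fin d → ℝ) :=
  SigmaCone A ∩ { z | norm2 z ≤ 1 }

/-- `‖v‖_M = √(vᵀ M v)`. -/
def qnorm {d : ℕ} (M : Matrix (Fin d) (Fin d) ℝ) (v : Fin d → ℝ) : ℝ :=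
  Real.sqrt (dotp v (M.mulVec v))

/-- The ellipsoid `E(M) = {z : ‖z‖_M ≤ 1}`. -/
def ell {d : ℕ} (M : Matrix (Fin d) (Fin d) ℝ) : Set (Fin d → ℝ) :=
  { z | qnorm M z ≤ 1 }

/-- The width of a set `X` along `a`: `sup {aᵀz : z ∈ X}`. -/
def widthOf {d : ℕ} (X : Set (Fin d → ℝ)) (a : Fin d → ℝ) : ℝ :=
  sSup { r : ℝ | ∃ z ∈ X, r = dotp a z }

/-- `P_A = conv(â_1,…,â_n) ∩ (−conv(â_1,…,â_n))`. -/
def PA {d : ℕ} {ι : Type} (A : Matrix (Fin d) ι ℝ) : Set (Fin d → ℝ) :=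
  convexHull ℝ (Set.range fun j => nml (mcol A j)) ∩
    (-(convexHull ℝ (Set.range fun j => nml (mcol A j))))

/-- `Δ_A`: maximum of `∏_{j ∈ B} ‖a_j‖` over sets `B` of linearly independent columns. -/
def DeltaA {d n : ℕ} (A : Matrix (Fin d) (Fin n) ℝ) : ℝ :=
  sSup { p : ℝ | ∃ B : Finset (Fin n),
    LinearIndependent ℝ (fun j : {x // x ∈ B} => mcol A j.1) ∧ p = ∏ j ∈ B, norm2 (mcol A j) }

/-- `T*_A`: indices `i` such that some `y` with `Aᵀy ≥ 0` has `a_iᵀ y > 0`. -/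
def TstarA {d : ℕ} {ι : Type} (A : Matrix (Fin d) ι ℝ) : Set ι :=
  { i | ∃ y : Fin d → ℝ, (∀ j, 0 ≤ dotp (mcol A j) y) ∧ 0 < dotp (mcol A i) y }

/-- `S*_A`: indices `i` such that some `x ≥ 0` with `Ax = 0` has `x_i > 0`. -/
def SstarA {d : ℕ} {ι : Type} [Fintype ι] (A : Matrix (Fin d) ι ℝ) : Set ι :=
  { i | ∃ x : ι → ℝ, (∀ j, 0 ≤ x j) ∧ A.mulVec x = 0 ∧ 0 < x i }

/-- `ω_A = min_{i ∈ T*_A} width_{F_A}(â_i)`. -/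
def omegaA {d : ℕ} {ι : Type} (A : Matrix (Fin d) ι ℝ) : ℝ :=
  sInf ((fun i => widthOf (FA A) (nml (mcol A i))) '' TstarA A)

lemma norm2_pos {d : ℕ} {v : Fin d → ℝ} (h : v ≠ 0) : 0 < norm2 v := by
  obtain ⟨i, hi⟩ : ∃ i, v i ≠ 0 := Function.ne_iff.mp h
  exact Real.sqrt_pos.mpr (Finset.sum_pos' (fun j _ => sq_nonneg _)
    ⟨i, Finset.mem_univ i, pow_two_pos_of_ne_zero hi⟩)

lemma mem_convexHull_range_iff' {d n : ℕ} (f : Fin n → (Fin d → ℝ)) (z : Fin d → ℝ) :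
    z ∈ convexHull ℝ (Set.range f) ↔
      ∃ w : Fin n → ℝ, (∀ j, 0 ≤ w j) ∧ ∑ j, w j = 1 ∧ ∑ j, w j • f j = z := by
  constructor
  · intro h
    rw [convexHull_range_eq_exists_affineCombination] at h
    obtain ⟨s, w, h0, h1, h2⟩ := h
    classical
    refine ⟨fun j => if j ∈ s then w j else 0, fun j => by by_cases hj : j ∈ s <;> simp [hj, h0 j], ?_, ?_⟩
    · rw [Finset.sum_ite_mem, Finset.univ_inter]; exact h1
    · rw [← h2, affineCombination_eq_centerMass h1, Finset.centerMass_eq_of_sum_1 _ _ h1]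
      simp only [ite_smul, zero_smul]
      rw [Finset.sum_ite_mem, Finset.univ_inter]
  · rintro ⟨w, h0, h1, rfl⟩
    have := Finset.centerMass_mem_convexHull (t := Finset.univ) (w := w) (z := f)
      (fun j _ => h0 j) (by rw [h1]; norm_num) (fun j _ => Set.mem_range_self j)
    rwa [Finset.centerMass_eq_of_sum_1 _ _ h1] at this

lemma sum_mem_convexHull_image' {d n : ℕ} (f : Fin n → (Fin d → ℝ)) (S : Set (Fin n))
    (w : Fin n → ℝ) (h0 : ∀ j, 0 ≤ w j) (h1 : ∑ j, w j = 1)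
    (hS : ∀ j, w j ≠ 0 → j ∈ S) :
    (∑ j, w j • f j) ∈ convexHull ℝ (f '' S) := by
  classical
  set t := Finset.univ.filter fun j => w j ≠ 0 with ht
  have hsum : ∑ j ∈ t, w j = 1 := by rw [ht, Finset.sum_filter_ne_zero]; exact h1
  have heq : ∑ j, w j • f j = ∑ j ∈ t, w j • f j := by
    symm
    apply Finset.sum_filter_of_ne
    intro j _ hne
    intro h; exact hne (by rw [h, zero_smul])
  rw [heq, ← Finset.centerMass_eq_of_sum_1 _ _ hsum]
  exact Finset.centerMass_mem_convexHull _ (fun j _ => h0 j) (by rw [hsum]; norm_num)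
    (fun j hj => Set.mem_image_of_mem f (hS j (Finset.mem_filter.mp hj).2))

/-- Lemma 4.4: `span(P_A) = im(A_{S*})` (the span of the columns of `A` indexed by
`S* = S*_A`), and `P_A = P_{A_{S*}}`. -/
theorem span_PA_eq_and_PA_eq
    {m n : ℕ} (A : Matrix (Fin m) (Fin n) ℝ) (hcols : ∀ j, mcol A j ≠ 0) :
    (Submodule.span ℝ (PA A) = Submodule.span ℝ (mcol A '' SstarA A)) ∧
    PA A = convexHull ℝ ((fun j => nml (mcol A j)) '' SstarA A) ∩
      (-(convexHull ℝ ((fun j => nml (mcol A j)) '' SstarA A))) := by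
  classical
  set b : Fin n → (Fin m → ℝ) := fun j => nml (mcol A j) with hb
  have hnpos : ∀ j, 0 < norm2 (mcol A j) := fun j => norm2_pos (hcols j)
  have hcol : ∀ j, mcol A j = norm2 (mcol A j) • b j := by
    intro j
    rw [hb]
    simp only [nml, smul_smul, mul_inv_cancel₀ (hnpos j).ne', one_smul]
  have hbne : ∀ j, b j ≠ 0 := by
    intro j h
    exact hcols j (by rw [hcol j, h, smul_zero])
  have hmv : ∀ x : Fin n → ℝ, A.mulVec x = ∑ j, x j • mcol A j := by
    intro x
    funext i
    simp [Matrix.mulVec, dotProduct, mcol, Finset.sum_apply, mul_comm]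
  -- key claim
  have key : ∀ z ∈ PA A, z ∈ convexHull ℝ (b '' SstarA A) ∧
      -z ∈ convexHull ℝ (b '' SstarA A) := by
    intro z hz
    obtain ⟨h1, h2⟩ := hz
    rw [Set.mem_neg] at h2
    obtain ⟨l, hl0, hl1, hlz⟩ := (mem_convexHull_range_iff' _ _).mp h1
    obtain ⟨u, hu0, hu1, huz⟩ := (mem_convexHull_range_iff' _ _).mp h2
    have hmem : ∀ j, l j + u j ≠ 0 → j ∈ SstarA A := by
      intro j hj
      have hjpos : 0 < l j + u j := lt_of_le_of_ne (add_nonneg (hl0 j) (hu0 j)) (Ne.symm hj)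
      refine ⟨fun k => (l k + u k) * (norm2 (mcol A k))⁻¹,
        fun k => mul_nonneg (add_nonneg (hl0 k) (hu0 k)) (inv_nonneg.mpr (hnpos k).le), ?_, ?_⟩
      · rw [hmv]
        have : ∀ k, ((l k + u k) * (norm2 (mcol A k))⁻¹) • mcol A k = (l k + u k) • b k := by
          intro k
          simp only [hb, nml, smul_smul]
        rw [Finset.sum_congr rfl fun k _ => this k]
        simp only [hb, add_smul, Finset.sum_add_distrib, hlz, huz, add_neg_cancel]
      · exact mul_pos hjpos (inv_pos.mpr (hnpos j))
    constructor
    · rw [← hlz]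
      exact sum_mem_convexHull_image' b _ l hl0 hl1 fun j hj =>
        hmem j (ne_of_gt (add_pos_of_pos_of_nonneg ((hl0 j).lt_of_ne (Ne.symm hj)) (hu0 j)))
    · rw [← huz]
      exact sum_mem_convexHull_image' b _ u hu0 hu1 fun j hj =>
        hmem j (ne_of_gt (add_pos_of_nonneg_of_pos (hl0 j) ((hu0 j).lt_of_ne (Ne.symm hj))))
  have claim2 : PA A = convexHull ℝ (b '' SstarA A) ∩ (-(convexHull ℝ (b '' SstarA A))) := by
    apply Set.Subset.antisymm
    · intro z hz
      obtain ⟨k1, k2⟩ := key z hz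
      exact ⟨k1, Set.mem_neg.mpr k2⟩
    · intro z hz
      exact ⟨convexHull_mono (Set.image_subset_range _ _) hz.1,
        Set.mem_neg.mpr (convexHull_mono (Set.image_subset_range _ _) (Set.mem_neg.mp hz.2))⟩
  refine ⟨?_, claim2⟩
  apply le_antisymm
  · rw [Submodule.span_le]
    have hsub : convexHull ℝ (b '' SstarA A) ⊆ ↑(Submodule.span ℝ (mcol A '' SstarA A)) := by
      apply convexHull_min ?_ (Submodule.convex _)
      rintro _ ⟨j, hj, rfl⟩
      have hmem : mcol A j ∈ Submodule.span ℝ (mcol A '' SstarA A) :=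
        Submodule.subset_span ⟨j, hj, rfl⟩
      have h2 : b j = (norm2 (mcol A j))⁻¹ • mcol A j := by simp only [hb, nml]
      rw [h2]
      exact Submodule.smul_mem _ _ hmem
    intro z hz
    exact hsub (key z hz).1
  · rw [Submodule.span_le]
    rintro _ ⟨i, hi, rfl⟩
    obtain ⟨x, hx0, hxA, hxi⟩ := hi
    set c : Fin n → ℝ := fun j => x j * norm2 (mcol A j) with hcdef
    have hc0 : ∀ j, 0 ≤ c j := fun j => mul_nonneg (hx0 j) (hnpos j).le
    have hci : 0 < c i := mul_pos hxi (hnpos i)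
    have hsum0 : ∑ j, c j • b j = 0 := by
      rw [hmv] at hxA
      rw [← hxA]
      apply Finset.sum_congr rfl
      intro j _
      simp only [hb, nml, smul_smul, hcdef]
      rw [mul_assoc, mul_inv_cancel₀ (hnpos j).ne', mul_one]
    set C := ∑ j, c j with hCdef
    have hciC : c i ≤ C := Finset.single_le_sum (fun j _ => hc0 j) (Finset.mem_univ i)
    have hC : 0 < C := lt_of_lt_of_le hci hciC
    have h2 : c i • b i + ∑ j ∈ Finset.univ.erase i, c j • b j = 0 := by
      rw [← hsum0]
      exact Finset.add_sum_erase _ (fun j => c j • b j) (Finset.mem_univ i)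
    have hErw : ∑ j ∈ Finset.univ.erase i, c j • b j = -(c i • b i) :=
      eq_neg_of_add_eq_zero_right h2
    have hCe : ∑ j ∈ Finset.univ.erase i, c j = C - c i := by
      have h3 := Finset.add_sum_erase Finset.univ c (Finset.mem_univ i)
      rw [← hCdef] at h3
      linarith
    have hCepos : 0 < C - c i := by
      rcases (sub_nonneg.mpr hciC).lt_or_eq with h | h
      · exact h
      · exfalso
        have hz : ∀ j ∈ Finset.univ.erase i, c j = 0 := by
          rw [← hCe] at h
          exact (Finset.sum_eq_zero_iff_of_nonneg (fun j _ => hc0 j)).mp h.symm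
        have hzero : ∑ j ∈ Finset.univ.erase i, c j • b j = 0 :=
          Finset.sum_eq_zero (fun j hj => by rw [hz j hj, zero_smul])
        rw [hzero] at hErw
        have hcb : c i • b i = 0 := by
          have := hErw.symm
          rwa [neg_eq_zero] at this
        exact hbne i ((smul_eq_zero.mp hcb).resolve_left hci.ne')
    have h0mem : (0 : Fin m → ℝ) ∈ convexHull ℝ (Set.range b) := by
      have h := Finset.centerMass_mem_convexHull (t := Finset.univ) (w := c) (z := b)
        (fun j _ => hc0 j) (by rw [← hCdef]; exact hC) (fun j _ => Set.mem_range_self j)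
      rwa [Finset.centerMass, hsum0, smul_zero] at h
    have hpmem : (C - c i)⁻¹ • (-(c i • b i)) ∈ convexHull ℝ (Set.range b) := by
      have h := Finset.centerMass_mem_convexHull (t := Finset.univ.erase i) (w := c) (z := b)
        (fun j _ => hc0 j) (by rw [hCe]; exact hCepos) (fun j _ => Set.mem_range_self j)
      rwa [Finset.centerMass, hCe, hErw] at h
    have hconv : Convex ℝ (convexHull ℝ (Set.range b)) := convex_convexHull ℝ _
    have hm1 : (c i / C) • b i ∈ convexHull ℝ (Set.range b) :=
      hconv.smul_mem_of_zero_mem h0mem (subset_convexHull ℝ _ (Set.mem_range_self i))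
        ⟨div_nonneg hci.le hC.le, (div_le_one hC).mpr hciC⟩
    have hm2 : -((c i / C) • b i) ∈ convexHull ℝ (Set.range b) := by
      have h := hconv.smul_mem_of_zero_mem h0mem hpmem
        (t := (C - c i) / C) ⟨div_nonneg hCepos.le hC.le, by rw [div_le_one hC]; linarith⟩
      have hs : (C - c i) / C * (C - c i)⁻¹ * c i = c i / C := by
        rw [div_mul_eq_mul_div, mul_inv_cancel₀ hCepos.ne', one_div, inv_mul_eq_div]
      have heq : ((C - c i) / C) • ((C - c i)⁻¹ • (-(c i • b i))) = -((c i / C) • b i) := by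
        rw [smul_neg, smul_neg, smul_smul, smul_smul, hs]
      rwa [heq] at h
    have hPAmem : (c i / C) • b i ∈ PA A := ⟨hm1, Set.mem_neg.mpr hm2⟩
    have hspan : (c i / C) • b i ∈ Submodule.span ℝ (PA A) := Submodule.subset_span hPAmem
    have hne : c i / C ≠ 0 := (div_pos hci hC).ne'
    have hrw : mcol A i = (norm2 (mcol A i) * (c i / C)⁻¹) • ((c i / C) • b i) := by
      rw [smul_smul, mul_assoc, inv_mul_cancel₀ hne, mul_one]
      exact hcol i
    rw [hrw]
    exact Submodule.smul_mem _ _ hspan
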